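/- Let A be a type, f : A → (ℕ → A), and N : A → ((ℕ → ℕ) → (ℕ → ℕ)) be such that N a is a modulus of convergence for f a for every a ∈ A. Let g : ℕ → A and let M be a modulus of convergence for g. For h : ℕ → ℕ set N'_h := λ n, N (g n) h n, and define H₁ h z := N'_h (M (h ∘ N'_h) z). Then H₁ is a modulus of convergence for the function λ n, f (g n) n (Merging of Functions). -/
import Mathlib


/-- `f↓[n,m]`: the function `f` is constant on the interval `[n,m]`. -/
def ConvOn {A : Type*} (f : ℕ → A) (n m : ℕ) : Prop :=
  ∀ x, n ≤ x → x ≤ m → f x = f n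

/-- `h ≥ id`. -/
def GeId (h : ℕ → ℕ) : Prop := ∀ x, x ≤ h x

/-- `M` is a modulus of convergence for `f`. -/
def IsModulus {A : Type*} (M : (ℕ → ℕ) → ℕ → ℕ) (f : ℕ → A) : Prop :=
  (∀ h, GeId h → GeId (M h)) ∧
  (∀ h, GeId h → ∀ z, ConvOn f (M h z) (h (M h z)))

/-- Merging of Functions: given a family `f : A → (ℕ → A)` with moduli of
convergence `N a` for each `f a`, and `g : ℕ → A` with modulus `M`, setting
`N'_h := λ n, N (g n) h n` and `H₁ h z := N'_h (M (h ∘ N'_h) z)`, the map `H₁`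
is a modulus of convergence for `λ n, f (g n) n`. -/
theorem merging_of_functions {A : Type*} (f : A → ℕ → A)
    (N : A → (ℕ → ℕ) → ℕ → ℕ) (hN : ∀ a : A, IsModulus (N a) (f a))
    (g : ℕ → A) (M : (ℕ → ℕ) → ℕ → ℕ) (hM : IsModulus M g) :
    IsModulus
      (fun h z =>
        (fun n => N (g n) h n) (M (h ∘ fun n => N (g n) h n) z))
      (fun n => f (g n) n) := by
  constructor
  · intro h hh z
    have hN' : GeId (h ∘ fun n => N (g n) h n) := by
      intro x
      calc x ≤ N (g x) h x := (hN (g x)).1 h hh x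
        _ ≤ h (N (g x) h x) := hh _
    calc z ≤ M (h ∘ fun n => N (g n) h n) z := hM.1 _ hN' z
      _ ≤ N (g _) h (M (h ∘ fun n => N (g n) h n) z) := (hN _).1 h hh _
  · intro h hh z
    have hN' : GeId (h ∘ fun n => N (g n) h n) := by
      intro x
      calc x ≤ N (g x) h x := (hN (g x)).1 h hh x
        _ ≤ h (N (g x) h x) := hh _
    set m := M (h ∘ fun n => N (g n) h n) z with hm
    set p := N (g m) h m with hp
    have hgconst : ConvOn g m (h p) := hM.2 _ hN' z
    have hmp : m ≤ p := (hN (g m)).1 h hh m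
    have hfconst : ConvOn (f (g m)) p (h p) := (hN (g m)).2 h hh m
    intro x hx1 hx2
    simp only
    have hgx : g x = g m := hgconst x (hmp.trans hx1) hx2
    have hgp : g p = g m := hgconst p hmp (hh p)
    rw [hgx, hgp, hfconst x hx1 hx2]
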